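/- Let H₁, H₂ be real Hilbert spaces, C ⊆ H₁ and Q ⊆ H₂ nonempty closed convex sets, A : H₁ → H₂ a bounded linear operator with adjoint A*, g : Q × Q → ℝ a monotone bifunction on Q with g(u, u) = 0 for all u ∈ Q, and T : Q → Q a nonexpansive mapping. Let x* ∈ C be such that A x* ∈ Q, T(A x*) = A x*, and g(A x*, v) ≥ 0 for all v ∈ Q. Let t ∈ C, μ > 0 with μ‖A‖² < 1, α > 0, and let u ∈ Q satisfy g(u, v) + (1/α)⟨v − u, u − A t⟩ ≥ 0 for all v ∈ Q. Then the metric projection x⁺ = P_C(t + μ A*(T(u) − A t)) satisfies ‖x⁺ − x*‖² ≤ ‖t − x*‖² − μ(1 − μ‖A‖²)‖T(u) − A t‖² − μ‖u − A t‖². -/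

import Mathlib

/-- Main one-step estimate: with `x*` a split solution, `u = T_α^g(A t)` a resolvent point and
`x⁺ = P_C(t + μA*(T(u) − At))`, one has
`‖x⁺ − x*‖² ≤ ‖t − x*‖² − μ(1 − μ‖A‖²)‖T(u) − At‖² − μ‖u − At‖²`. -/
theorem projection_step_estimate
    {H₁ : Type*} [NormedAddCommGroup H₁] [InnerProductSpace ℝ H₁] [CompleteSpace H₁]
    {H₂ : Type*} [NormedAddCommGroup H₂] [InnerProductSpace ℝ H₂] [CompleteSpace H₂]
    (C : Set H₁) (hCne : C.Nonempty) (hCcl : IsClosed C) (hCcv : Convex ℝ C)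
    (Q : Set H₂) (hQne : Q.Nonempty) (hQcl : IsClosed Q) (hQcv : Convex ℝ Q)
    (A : H₁ →L[ℝ] H₂)
    (g : H₂ → H₂ → ℝ)
    (hg0 : ∀ u ∈ Q, g u u = 0)
    (hmono : ∀ u ∈ Q, ∀ v ∈ Q, g u v + g v u ≤ 0)
    (T : H₂ → H₂) (hT : Set.MapsTo T Q Q)
    (hTne : ∀ x ∈ Q, ∀ y ∈ Q, ‖T x - T y‖ ≤ ‖x - y‖)
    (xstar : H₁) (hxstarC : xstar ∈ C) (hAxstarQ : A xstar ∈ Q)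
    (hfix : T (A xstar) = A xstar) (hsol : ∀ v ∈ Q, g (A xstar) v ≥ 0)
    (t : H₁) (htC : t ∈ C)
    (μ : ℝ) (hμ0 : 0 < μ) (hμ : μ * ‖A‖ ^ 2 < 1)
    (α : ℝ) (hα : 0 < α)
    (u : H₂) (huQ : u ∈ Q)
    (hu : ∀ v ∈ Q, g u v + (1 / α) * (inner ℝ (v - u) (u - A t) : ℝ) ≥ 0)
    (xplus : H₁) (hxplusC : xplus ∈ C)
    (hproj : ∀ w ∈ C,
      (inner ℝ ((t + μ • (ContinuousLinearMap.adjoint A) (T u - A t)) - xplus) (w - xplus) : ℝ) ≤ 0) :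
    ‖xplus - xstar‖ ^ 2 ≤ ‖t - xstar‖ ^ 2
      - μ * (1 - μ * ‖A‖ ^ 2) * ‖T u - A t‖ ^ 2 - μ * ‖u - A t‖ ^ 2 := by
  set B := ContinuousLinearMap.adjoint A with hB
  set w := T u - A t with hw
  set z := t + μ • B w with hz
  -- projection inequality
  have h1 : (inner ℝ (z - xplus) (xstar - xplus) : ℝ) ≤ 0 := hproj xstar hxstarC
  have h1' : (0:ℝ) ≤ inner ℝ (z - xplus) (xplus - xstar) := by
    have heq : (inner ℝ (z - xplus) (xstar - xplus) : ℝ)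
        = - inner ℝ (z - xplus) (xplus - xstar) := by
      rw [show xstar - xplus = -(xplus - xstar) by abel, inner_neg_right]
    rw [heq] at h1; linarith
  -- step 1
  have key1 : ‖xplus - xstar‖^2 ≤ ‖z - xstar‖^2 := by
    have hd : z - xstar = (z - xplus) + (xplus - xstar) := by abel
    have hexp := norm_add_sq_real (z - xplus) (xplus - xstar)
    rw [← hd] at hexp
    nlinarith [sq_nonneg ‖z - xplus‖]
  -- resolvent firm nonexpansiveness ingredient
  have hres : (0:ℝ) ≤ inner ℝ (A xstar - u) (u - A t) := by
    have ha := hu (A xstar) hAxstarQ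
    have hb := hmono u huQ (A xstar) hAxstarQ
    have hc := hsol u huQ
    have hαinv : 0 < 1/α := by positivity
    nlinarith [ha, hb, hc]
  have h2 : ‖u - A xstar‖^2 + ‖u - A t‖^2 ≤ ‖A t - A xstar‖^2 := by
    have hd : A t - A xstar = (A t - u) + (u - A xstar) := by abel
    have hexp := norm_add_sq_real (A t - u) (u - A xstar)
    rw [← hd] at hexp
    have hin : (inner ℝ (A t - u) (u - A xstar) : ℝ) = inner ℝ (A xstar - u) (u - A t) := by
      rw [show A t - u = -(u - A t) by abel, show u - A xstar = -(A xstar - u) by abel,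
        inner_neg_neg, real_inner_comm]
    rw [hin, norm_sub_rev (A t) u] at hexp
    linarith
  -- nonexpansiveness
  have h3 : ‖T u - A xstar‖ ≤ ‖u - A xstar‖ := by
    have := hTne u huQ (A xstar) hAxstarQ
    rwa [hfix] at this
  have h3sq : ‖T u - A xstar‖^2 ≤ ‖u - A xstar‖^2 :=
    pow_le_pow_left₀ (norm_nonneg _) h3 2
  -- key3
  have key3 : 2 * (inner ℝ (A t - A xstar) w : ℝ) ≤ - ‖w‖^2 - ‖u - A t‖^2 := by
    have hexp := norm_sub_sq_real (T u - A xstar) w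
    have hdd : T u - A xstar - w = A t - A xstar := by rw [hw]; abel
    rw [hdd] at hexp
    have hcm : (inner ℝ (A t - A xstar) w : ℝ) = inner ℝ (T u - A xstar) w - ‖w‖^2 := by
      rw [show A t - A xstar = (T u - A xstar) - w by rw [hw]; abel,
        inner_sub_left, real_inner_self_eq_norm_sq]
    linarith
  -- adjoint norm bound
  have h4 : ‖B w‖ ≤ ‖A‖ * ‖w‖ := by
    have h := (ContinuousLinearMap.adjoint A).le_opNorm w
    rwa [LinearIsometryEquiv.norm_map ContinuousLinearMap.adjoint A, ← hB] at h
  -- step 2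
  have key2 : ‖z - xstar‖^2 ≤ ‖t - xstar‖^2 + 2*μ*(inner ℝ (A t - A xstar) w : ℝ)
      + μ^2 * ‖A‖^2 * ‖w‖^2 := by
    have hd : z - xstar = (t - xstar) + μ • B w := by rw [hz]; abel
    have hexp := norm_add_sq_real (t - xstar) (μ • B w)
    rw [← hd] at hexp
    have hin : (inner ℝ (t - xstar) (μ • B w) : ℝ) = μ * inner ℝ (A t - A xstar) w := by
      rw [real_inner_smul_right, hB, ContinuousLinearMap.adjoint_inner_right, map_sub]
    have hns : ‖μ • B w‖^2 ≤ μ^2 * ‖A‖^2 * ‖w‖^2 := by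
      rw [norm_smul, mul_pow, Real.norm_eq_abs, sq_abs]
      have hsq : ‖B w‖^2 ≤ (‖A‖ * ‖w‖)^2 := pow_le_pow_left₀ (norm_nonneg _) h4 2
      calc μ^2 * ‖B w‖^2 ≤ μ^2 * (‖A‖ * ‖w‖)^2 :=
            mul_le_mul_of_nonneg_left hsq (sq_nonneg μ)
        _ = μ^2 * ‖A‖^2 * ‖w‖^2 := by ring
    rw [hin] at hexp
    linarith
  have hkey3' := mul_le_mul_of_nonneg_left key3 hμ0.le
  linarith [key1, key2, hkey3']
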